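/- Let Γ > 0 and let K : ℕ → ℝ satisfy 0 < K(1) = K(2) = K(3) = K(4), K(4) ≤ K(5), and for every n ≥ 5, K(n) = Γ·[ Σ_{p=1}^{n−1} K(p)·K(n−p) + Σ_{p=2}^{n−1} K(p)·K(n+1−p) + Σ_{p=3}^{n−1} K(p)·K(n+2−p) + Σ_{p=4}^{n−1} K(p)·K(n+3−p) ]. Then there exist constants M₀ > 0 and M₁ > 0 such that K(n) ≤ M₀·M₁ⁿ for all n ≥ 1. -/

import Mathlib

open Finset

private lemma sum_inv_sq_Icc (N : ℕ) (hN : 1 ≤ N) :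
    ∑ p ∈ Icc 1 N, (1:ℝ)/(p:ℝ)^2 ≤ 2 - 1/N := by
  induction N, hN using Nat.le_induction with
  | base => norm_num
  | succ N hN ih =>
      rw [Finset.sum_Icc_succ_top (by omega : 1 ≤ N + 1)]
      have hx : (1:ℝ) ≤ N := by exact_mod_cast hN
      have h1 : (0:ℝ) < (N:ℝ) := by linarith
      have h2 : (0:ℝ) < (N:ℝ)+1 := by linarith
      have key : 1/((N:ℝ)+1)^2 ≤ 1/(N:ℝ) - 1/((N:ℝ)+1) := by
        rw [div_sub_div _ _ (ne_of_gt h1) (ne_of_gt h2), div_le_div_iff₀ (by positivity) (by positivity)]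
        nlinarith
      push_cast
      linarith

private lemma sum_inv_sq_Ico (N : ℕ) :
    ∑ p ∈ Ico 1 N, (1:ℝ)/(p:ℝ)^2 ≤ 2 := by
  rcases Nat.eq_zero_or_pos N with h|h
  · simp [h]
  · calc ∑ p ∈ Ico 1 N, (1:ℝ)/(p:ℝ)^2
        ≤ ∑ p ∈ Icc 1 N, (1:ℝ)/(p:ℝ)^2 :=
          Finset.sum_le_sum_of_subset_of_nonneg Ico_subset_Icc_self (by intros; positivity)
      _ ≤ 2 - 1/N := sum_inv_sq_Icc N h
      _ ≤ 2 := by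
          have : (0:ℝ) ≤ 1/N := by positivity
          linarith

private lemma sum_reflect (m : ℕ) (f : ℕ → ℝ) :
    ∑ p ∈ Ico 1 m, f (m - p) = ∑ p ∈ Ico 1 m, f p := by
  apply Finset.sum_nbij' (fun p => m - p) (fun p => m - p)
  all_goals intro a ha <;> simp only [mem_Ico] at * <;> omega

private lemma conv_bound (m : ℕ) (hm : 2 ≤ m) :
    ∑ p ∈ Ico 1 m, (1:ℝ)/((p:ℝ)^2 * ((m - p : ℕ):ℝ)^2) ≤ 8/(m:ℝ)^2 := by
  have hm0 : (0:ℝ) < m := by exact_mod_cast Nat.lt_of_lt_of_le (by norm_num) hm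
  have step : ∀ p ∈ Ico 1 m, (1:ℝ)/((p:ℝ)^2 * ((m - p : ℕ):ℝ)^2)
      ≤ 2/(m:ℝ)^2 * ((1:ℝ)/(p:ℝ)^2 + (1:ℝ)/((m - p : ℕ):ℝ)^2) := by
    intro p hp
    obtain ⟨hp1, hp2⟩ := mem_Ico.mp hp
    have hx : (1:ℝ) ≤ (p:ℝ) := by exact_mod_cast hp1
    have hy : (1:ℝ) ≤ ((m - p : ℕ):ℝ) := by
      have : 1 ≤ m - p := by omega
      exact_mod_cast this
    have hxy : (p:ℝ) + ((m - p : ℕ):ℝ) = (m:ℝ) := by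
      have : p + (m - p) = m := by omega
      exact_mod_cast this
    set x := (p:ℝ)
    set y := ((m - p : ℕ):ℝ)
    have key : (m:ℝ)^2 ≤ 2*(x^2 + y^2) := by nlinarith [sq_nonneg (x - y)]
    have rhs_eq : 2/(m:ℝ)^2 * ((1:ℝ)/x^2 + 1/y^2) = 2*(x^2+y^2) / ((m:ℝ)^2 * (x^2*y^2)) := by
      field_simp; ring
    rw [rhs_eq, div_le_div_iff₀ (by positivity) (by positivity)]
    nlinarith [mul_le_mul_of_nonneg_right key (by positivity : (0:ℝ) ≤ x^2*y^2)]
  calc ∑ p ∈ Ico 1 m, (1:ℝ)/((p:ℝ)^2 * ((m - p : ℕ):ℝ)^2)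
      ≤ ∑ p ∈ Ico 1 m, 2/(m:ℝ)^2 * ((1:ℝ)/(p:ℝ)^2 + (1:ℝ)/((m - p : ℕ):ℝ)^2) :=
        Finset.sum_le_sum step
    _ = 2/(m:ℝ)^2 * ((∑ p ∈ Ico 1 m, (1:ℝ)/(p:ℝ)^2) + ∑ p ∈ Ico 1 m, (1:ℝ)/((m - p : ℕ):ℝ)^2) := by
        rw [← Finset.mul_sum, Finset.sum_add_distrib]
    _ = 2/(m:ℝ)^2 * ((∑ p ∈ Ico 1 m, (1:ℝ)/(p:ℝ)^2) + ∑ p ∈ Ico 1 m, (1:ℝ)/(p:ℝ)^2) := by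
        rw [sum_reflect m (fun q => (1:ℝ)/(q:ℝ)^2)]
    _ ≤ 2/(m:ℝ)^2 * (2 + 2) := by
        have h := sum_inv_sq_Ico m
        have : (0:ℝ) ≤ 2/(m:ℝ)^2 := by positivity
        nlinarith
    _ = 8/(m:ℝ)^2 := by ring

private lemma Tbound (K : ℕ → ℝ) (c M R : ℝ)
    (hc : 0 < c) (hM : 0 ≤ M) (hR : 1 ≤ R)
    (hsm : ∀ p, 1 ≤ p → p ≤ 3 → K p = c)
    (hnn : ∀ m, 1 ≤ m → 0 ≤ K m)
    (n : ℕ) (hn : 7 ≤ n)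
    (hIH : ∀ m, 4 ≤ m → m < n → K m ≤ M * R ^ m / (m:ℝ)^2)
    (k : ℕ) (hk : k ≤ 3) :
    ∑ p ∈ Ico (k+1) n, K p * K (n + k - p)
      ≤ (24*c*M*R^(n-1) + 8*M^2*R^(n+3)) / (n:ℝ)^2 := by
  have hR0 : (0:ℝ) < R := lt_of_lt_of_le one_pos hR
  have hn0 : (0:ℝ) < (n:ℝ) := by exact_mod_cast Nat.lt_of_lt_of_le (by norm_num) hn
  -- generic bound for "large" indices: 4 ≤ m, n-3 ≤ m ≤ n-1 gives K m ≤ 4*M*R^(n-1)/n²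
  have hbig : ∀ m : ℕ, 4 ≤ m → n - 3 ≤ m → m < n → K m ≤ 4*M*R^(n-1)/(n:ℝ)^2 := by
    intro m h4 hlow hlt
    have h1 := hIH m h4 hlt
    have hm0 : (0:ℝ) < (m:ℝ) := by exact_mod_cast Nat.lt_of_lt_of_le (by norm_num) h4
    have hRm : R^m ≤ R^(n-1) := pow_le_pow_right₀ hR (by omega)
    have h2n : (n:ℝ) ≤ 2*(m:ℝ) := by
      have : n ≤ 2*m := by omega
      exact_mod_cast this
    calc K m ≤ M * R^m / (m:ℝ)^2 := h1
      _ ≤ M * R^(n-1) / (m:ℝ)^2 := by gcongr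
      _ ≤ 4*M*R^(n-1)/(n:ℝ)^2 := by
          rw [div_le_div_iff₀ (by positivity) (by positivity)]
          have hMR : (0:ℝ) ≤ M * R^(n-1) := by positivity
          nlinarith [mul_le_mul_of_nonneg_left (mul_le_mul h2n h2n hn0.le (by positivity)) hMR]
  have hEdge : (0:ℝ) ≤ 4*c*M*R^(n-1)/(n:ℝ)^2 := by positivity
  -- split the sum
  have split1 := Finset.sum_Ico_consecutive (fun p => K p * K (n + k - p))
      (by omega : k+1 ≤ 4) (by omega : 4 ≤ n)
  have split2 := Finset.sum_Ico_consecutive (fun p => K p * K (n + k - p))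
      (by omega : 4 ≤ n + k - 3) (by omega : n + k - 3 ≤ n)
  rw [← split1, ← split2]
  -- (A) left edge
  have hA : ∑ p ∈ Ico (k+1) 4, K p * K (n + k - p) ≤ 12*c*M*R^(n-1)/(n:ℝ)^2 := by
    have hterm : ∀ p ∈ Ico (k+1) 4, K p * K (n + k - p) ≤ 4*c*M*R^(n-1)/(n:ℝ)^2 := by
      intro p hp
      obtain ⟨hp1, hp2⟩ := mem_Ico.mp hp
      rw [hsm p (by omega) (by omega)]
      have hq := hbig (n + k - p) (by omega) (by omega) (by omega)
      calc c * K (n + k - p) ≤ c * (4*M*R^(n-1)/(n:ℝ)^2) :=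
            mul_le_mul_of_nonneg_left hq hc.le
        _ = 4*c*M*R^(n-1)/(n:ℝ)^2 := by ring
    calc ∑ p ∈ Ico (k+1) 4, K p * K (n + k - p)
        ≤ (Ico (k+1) 4).card • (4*c*M*R^(n-1)/(n:ℝ)^2) := Finset.sum_le_card_nsmul _ _ _ hterm
      _ = ((Ico (k+1) 4).card : ℝ) * (4*c*M*R^(n-1)/(n:ℝ)^2) := by
          rw [nsmul_eq_mul]
      _ ≤ 3 * (4*c*M*R^(n-1)/(n:ℝ)^2) := by
          apply mul_le_mul_of_nonneg_right _ hEdge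
          have : (Ico (k+1) 4).card ≤ 3 := by
            rw [Nat.card_Ico]; omega
          exact_mod_cast this
      _ = 12*c*M*R^(n-1)/(n:ℝ)^2 := by ring
  -- (C) right edge
  have hC : ∑ p ∈ Ico (n+k-3) n, K p * K (n + k - p) ≤ 12*c*M*R^(n-1)/(n:ℝ)^2 := by
    have hterm : ∀ p ∈ Ico (n+k-3) n, K p * K (n + k - p) ≤ 4*c*M*R^(n-1)/(n:ℝ)^2 := by
      intro p hp
      obtain ⟨hp1, hp2⟩ := mem_Ico.mp hp
      rw [hsm (n + k - p) (by omega) (by omega)]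
      have hq := hbig p (by omega) (by omega) (by omega)
      calc K p * c ≤ (4*M*R^(n-1)/(n:ℝ)^2) * c :=
            mul_le_mul_of_nonneg_right hq hc.le
        _ = 4*c*M*R^(n-1)/(n:ℝ)^2 := by ring
    calc ∑ p ∈ Ico (n+k-3) n, K p * K (n + k - p)
        ≤ (Ico (n+k-3) n).card • (4*c*M*R^(n-1)/(n:ℝ)^2) := Finset.sum_le_card_nsmul _ _ _ hterm
      _ = ((Ico (n+k-3) n).card : ℝ) * (4*c*M*R^(n-1)/(n:ℝ)^2) := by rw [nsmul_eq_mul]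
      _ ≤ 3 * (4*c*M*R^(n-1)/(n:ℝ)^2) := by
          apply mul_le_mul_of_nonneg_right _ hEdge
          have : (Ico (n+k-3) n).card ≤ 3 := by rw [Nat.card_Ico]; omega
          exact_mod_cast this
      _ = 12*c*M*R^(n-1)/(n:ℝ)^2 := by ring
  -- (B) middle
  have hB : ∑ p ∈ Ico 4 (n+k-3), K p * K (n + k - p) ≤ 8*M^2*R^(n+3)/(n:ℝ)^2 := by
    have hterm : ∀ p ∈ Ico 4 (n+k-3), K p * K (n + k - p)
        ≤ M^2*R^(n+k) * ((1:ℝ)/((p:ℝ)^2 * ((n + k - p : ℕ):ℝ)^2)) := by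
      intro p hp
      obtain ⟨hp1, hp2⟩ := mem_Ico.mp hp
      have hKp := hIH p hp1 (by omega)
      have hKq := hIH (n + k - p) (by omega) (by omega)
      have hp0 : (0:ℝ) < (p:ℝ) := by exact_mod_cast Nat.lt_of_lt_of_le (by norm_num) hp1
      have hq0 : (0:ℝ) < ((n + k - p : ℕ):ℝ) := by
        have : 0 < n + k - p := by omega
        exact_mod_cast this
      have hRpq : R^p * R^(n+k-p) = R^(n+k) := by
        rw [← pow_add]; congr 1; omega
      calc K p * K (n + k - p)
          ≤ (M * R^p / (p:ℝ)^2) * (M * R^(n+k-p) / ((n + k - p : ℕ):ℝ)^2) :=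
            mul_le_mul hKp hKq (hnn _ (by omega)) (by positivity)
        _ = M^2*(R^p * R^(n+k-p)) * ((1:ℝ)/((p:ℝ)^2 * ((n + k - p : ℕ):ℝ)^2)) := by
            field_simp
        _ = M^2*R^(n+k) * ((1:ℝ)/((p:ℝ)^2 * ((n + k - p : ℕ):ℝ)^2)) := by rw [hRpq]
    have hsub : ∑ p ∈ Ico 4 (n+k-3), (1:ℝ)/((p:ℝ)^2 * ((n + k - p : ℕ):ℝ)^2)
        ≤ 8/((n+k : ℕ):ℝ)^2 := by
      calc ∑ p ∈ Ico 4 (n+k-3), (1:ℝ)/((p:ℝ)^2 * ((n + k - p : ℕ):ℝ)^2)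
          ≤ ∑ p ∈ Ico 1 (n+k), (1:ℝ)/((p:ℝ)^2 * ((n + k - p : ℕ):ℝ)^2) := by
            apply Finset.sum_le_sum_of_subset_of_nonneg
            · intro x hx
              simp only [mem_Ico] at *
              omega
            · intro i hi _
              obtain ⟨h1, h2⟩ := mem_Ico.mp hi
              have : 0 < n + k - i := by omega
              have hi0 : (0:ℝ) < (i:ℝ) := by exact_mod_cast h1
              have hq0 : (0:ℝ) < ((n + k - i : ℕ):ℝ) := by exact_mod_cast this
              positivity
        _ ≤ 8/((n+k : ℕ):ℝ)^2 := conv_bound (n+k) (by omega)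
    have hnk : (n:ℝ) ≤ ((n+k : ℕ):ℝ) := by exact_mod_cast Nat.le_add_right n k
    have hRnk : R^(n+k) ≤ R^(n+3) := pow_le_pow_right₀ hR (by omega)
    calc ∑ p ∈ Ico 4 (n+k-3), K p * K (n + k - p)
        ≤ ∑ p ∈ Ico 4 (n+k-3), M^2*R^(n+k) * ((1:ℝ)/((p:ℝ)^2 * ((n + k - p : ℕ):ℝ)^2)) :=
          Finset.sum_le_sum hterm
      _ = M^2*R^(n+k) * ∑ p ∈ Ico 4 (n+k-3), (1:ℝ)/((p:ℝ)^2 * ((n + k - p : ℕ):ℝ)^2) := by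
          rw [← Finset.mul_sum]
      _ ≤ M^2*R^(n+k) * (8/((n+k : ℕ):ℝ)^2) :=
          mul_le_mul_of_nonneg_left hsub (by positivity)
      _ ≤ M^2*R^(n+3) * (8/(n:ℝ)^2) := by gcongr
      _ = 8*M^2*R^(n+3)/(n:ℝ)^2 := by ring
  have hfinal : (24*c*M*R^(n-1) + 8*M^2*R^(n+3)) / (n:ℝ)^2
      = 12*c*M*R^(n-1)/(n:ℝ)^2 + 8*M^2*R^(n+3)/(n:ℝ)^2 + 12*c*M*R^(n-1)/(n:ℝ)^2 := by
    ring
  rw [hfinal]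
  have := add_le_add (add_le_add hA hB) hC
  linarith

private lemma Kpos_all (Γ : ℝ) (hΓ : 0 < Γ) (K : ℕ → ℝ) (hK1 : 0 < K 1)
    (h12 : K 1 = K 2) (h23 : K 2 = K 3) (h34 : K 3 = K 4)
    (hrec : ∀ n : ℕ, 5 ≤ n → K n =
      Γ * ((∑ p ∈ Finset.Ico 1 n, K p * K (n - p))
         + (∑ p ∈ Finset.Ico 2 n, K p * K (n + 1 - p))
         + (∑ p ∈ Finset.Ico 3 n, K p * K (n + 2 - p))
         + (∑ p ∈ Finset.Ico 4 n, K p * K (n + 3 - p)))) :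
    ∀ n, 1 ≤ n → 0 < K n := by
  intro n
  induction n using Nat.strong_induction_on with
  | _ n ih =>
    intro hn
    rcases Nat.lt_or_ge n 5 with h|h
    · interval_cases n
      · exact hK1
      · rwa [← h12]
      · rwa [← h23, ← h12]
      · rwa [← h34, ← h23, ← h12]
    · rw [hrec n h]
      apply mul_pos hΓ
      have hpos1 : 0 < ∑ p ∈ Finset.Ico 1 n, K p * K (n - p) := by
        apply Finset.sum_pos
        · intro p hp
          obtain ⟨h1, h2⟩ := mem_Ico.mp hp
          exact mul_pos (ih p h2 h1) (ih (n - p) (by omega) (by omega))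
        · exact ⟨1, mem_Ico.mpr (by omega)⟩
      have hnn : ∀ k, k ≤ 3 → 0 ≤ ∑ p ∈ Finset.Ico (k+1) n, K p * K (n + k - p) := by
        intro k hk
        apply Finset.sum_nonneg
        intro p hp
        obtain ⟨h1, h2⟩ := mem_Ico.mp hp
        exact le_of_lt (mul_pos (ih p h2 (by omega)) (ih (n + k - p) (by omega) (by omega)))
      have h1 := hnn 1 (by norm_num)
      have h2 := hnn 2 (by norm_num)
      have h3 := hnn 3 (by norm_num)
      norm_num at h1 h2 h3
      linarith

set_option maxHeartbeats 1000000 in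
theorem K_sequence_geometric_bound
    (Γ : ℝ) (hΓ : 0 < Γ)
    (K : ℕ → ℝ) (hKpos : 0 < K 1)
    (h12 : K 1 = K 2) (h23 : K 2 = K 3) (h34 : K 3 = K 4)
    (h45 : K 4 ≤ K 5)
    (hrec : ∀ n : ℕ, 5 ≤ n → K n =
      Γ * ((∑ p ∈ Finset.Ico 1 n, K p * K (n - p))
         + (∑ p ∈ Finset.Ico 2 n, K p * K (n + 1 - p))
         + (∑ p ∈ Finset.Ico 3 n, K p * K (n + 2 - p))
         + (∑ p ∈ Finset.Ico 4 n, K p * K (n + 3 - p)))) :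
    ∃ M₀ M₁ : ℝ, 0 < M₀ ∧ 0 < M₁ ∧ ∀ n : ℕ, 1 ≤ n → K n ≤ M₀ * M₁ ^ n := by
  have hpos := Kpos_all Γ hΓ K hKpos h12 h23 h34 hrec
  set c : ℝ := K 1 with hcdef
  have hc : 0 < c := hKpos
  have hK5 : 0 < K 5 := hpos 5 (by norm_num)
  have hK6 : 0 < K 6 := hpos 6 (by norm_num)
  set R : ℝ := 1 + 2304*Γ*(c + K 5 + K 6) with hRdef
  have hΓc : 0 < Γ*c := mul_pos hΓ hc
  have hΓ5 : 0 < Γ*(K 5) := mul_pos hΓ hK5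
  have hΓ6 : 0 < Γ*(K 6) := mul_pos hΓ hK6
  have hR1 : 1 ≤ R := by rw [hRdef]; nlinarith
  have hRc : 1024*Γ*c ≤ R := by rw [hRdef]; nlinarith
  have hR5 : 2304*Γ*(K 5) ≤ R := by rw [hRdef]; nlinarith
  have hR6 : 2304*Γ*(K 6) ≤ R := by rw [hRdef]; nlinarith
  have hR192 : 192*Γ*c ≤ R := by rw [hRdef]; nlinarith
  have hR0 : 0 < R := lt_of_lt_of_le one_pos hR1
  set M : ℝ := 1/(64*Γ*R^3) with hMdef
  have hM0 : 0 < M := by rw [hMdef]; positivity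
  have hsm : ∀ p, 1 ≤ p → p ≤ 3 → K p = c := by
    intro p h1 h3
    interval_cases p
    · rfl
    · rw [← h12]
    · rw [← h23, ← h12]
  have hnn : ∀ m, 1 ≤ m → 0 ≤ K m := fun m hm => (hpos m hm).le
  -- main inductive bound
  have main : ∀ n, 4 ≤ n → K n ≤ M * R^n / (n:ℝ)^2 := by
    intro n
    induction n using Nat.strong_induction_on with
    | _ n ih =>
      intro hn
      rcases Nat.lt_or_ge n 7 with h7|h7
      · -- base cases n = 4, 5, 6
        interval_cases n
        · -- n = 4 : need c ≤ M*R^4/16, i.e. 1024*Γ*c ≤ R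
          have e : M * R^4 / ((4:ℕ):ℝ)^2 = R/(1024*Γ) := by
            rw [hMdef]; push_cast; field_simp; ring
          rw [show K 4 = c by rw [← h34, ← h23, ← h12], e, le_div_iff₀ (by positivity)]
          nlinarith
        · have e : M * R^5 / ((5:ℕ):ℝ)^2 = R^2/(1600*Γ) := by
            rw [hMdef]; push_cast; field_simp; ring
          rw [e, le_div_iff₀ (by positivity)]
          have hRsq : R ≤ R^2 := by nlinarith
          nlinarith
        · have e : M * R^6 / ((6:ℕ):ℝ)^2 = R^3/(2304*Γ) := by
            rw [hMdef]; push_cast; field_simp; ring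
          rw [e, le_div_iff₀ (by positivity)]
          have hRcube : R ≤ R^3 := by nlinarith [sq_nonneg R, sq_nonneg (R-1)]
          nlinarith
      · -- step n ≥ 7
        have hIH' : ∀ m, 4 ≤ m → m < n → K m ≤ M * R^m / (m:ℝ)^2 :=
          fun m h4 hlt => ih m hlt h4
        have T0 := Tbound K c M R hc hM0.le hR1 hsm hnn n h7 hIH' 0 (by norm_num)
        have T1 := Tbound K c M R hc hM0.le hR1 hsm hnn n h7 hIH' 1 (by norm_num)
        have T2 := Tbound K c M R hc hM0.le hR1 hsm hnn n h7 hIH' 2 (by norm_num)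
        have T3 := Tbound K c M R hc hM0.le hR1 hsm hnn n h7 hIH' 3 (by norm_num)
        simp only [Nat.add_zero, Nat.zero_add, Nat.reduceAdd] at T0 T1 T2 T3
        rw [hrec n (by omega)]
        have hn0 : (0:ℝ) < (n:ℝ) := by exact_mod_cast Nat.lt_of_lt_of_le (by norm_num) h7
        have hsum : (∑ p ∈ Finset.Ico 1 n, K p * K (n - p))
             + (∑ p ∈ Finset.Ico 2 n, K p * K (n + 1 - p))
             + (∑ p ∈ Finset.Ico 3 n, K p * K (n + 2 - p))
             + (∑ p ∈ Finset.Ico 4 n, K p * K (n + 3 - p))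
             ≤ 4 * ((24*c*M*R^(n-1) + 8*M^2*R^(n+3)) / (n:ℝ)^2) := by
          linarith
        have key : Γ * (4 * ((24*c*M*R^(n-1) + 8*M^2*R^(n+3)) / (n:ℝ)^2)) ≤ M * R^n / (n:ℝ)^2 := by
          rw [show Γ * (4 * ((24*c*M*R^(n-1) + 8*M^2*R^(n+3)) / (n:ℝ)^2))
              = (Γ * (96*c*M*R^(n-1) + 32*M^2*R^(n+3))) / (n:ℝ)^2 by ring]
          apply div_le_div_of_nonneg_right ?_ (by positivity)
          have e1 : R^n = R^(n-1) * R := by rw [← pow_succ]; congr 1; omega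
          have e2 : R^(n+3) = R^n * R^3 := by rw [pow_add]
          have p2 : 32*Γ*M^2*R^(n+3) = (1/2)*(M*R^n) := by
            rw [e2, hMdef]; field_simp; ring
          have p1 : 96*Γ*c*(M*R^(n-1)) ≤ (R/2)*(M*R^(n-1)) :=
            mul_le_mul_of_nonneg_right (by linarith) (by positivity)
          have p1' : (R/2)*(M*R^(n-1)) = (1/2)*(M*R^n) := by rw [e1]; ring
          have expand : Γ * (96*c*M*R^(n-1) + 32*M^2*R^(n+3))
              = 96*Γ*c*(M*R^(n-1)) + 32*Γ*M^2*R^(n+3) := by ring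
          rw [expand]
          linarith
        calc Γ * ((∑ p ∈ Finset.Ico 1 n, K p * K (n - p))
             + (∑ p ∈ Finset.Ico 2 n, K p * K (n + 1 - p))
             + (∑ p ∈ Finset.Ico 3 n, K p * K (n + 2 - p))
             + (∑ p ∈ Finset.Ico 4 n, K p * K (n + 3 - p)))
            ≤ Γ * (4 * ((24*c*M*R^(n-1) + 8*M^2*R^(n+3)) / (n:ℝ)^2)) :=
              mul_le_mul_of_nonneg_left hsum hΓ.le
          _ ≤ M * R^n / (n:ℝ)^2 := key
  -- conclude
  refine ⟨M + c, R, by linarith, hR0, ?_⟩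
  intro n hn
  have hRn1 : (1:ℝ) ≤ R^n := by
    calc (1:ℝ) = R^0 := (pow_zero R).symm
      _ ≤ R^n := pow_le_pow_right₀ hR1 (Nat.zero_le n)
  rcases Nat.lt_or_ge n 4 with h|h
  · have hKn : K n = c := by interval_cases n <;> [rfl; rw [← h12]; rw [← h23, ← h12]]
    rw [hKn]
    nlinarith
  · have h1 := main n h
    have hn1 : (1:ℝ) ≤ ((n:ℝ))^2 := by
      have : (1:ℝ) ≤ (n:ℝ) := by exact_mod_cast (by omega : 1 ≤ n)
      nlinarith
    have h2 : M * R^n / (n:ℝ)^2 ≤ M * R^n := by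
      apply div_le_self (by positivity) hn1
    have h3 : M * R^n ≤ (M + c) * R^n := by nlinarith
    linarith
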